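/- arXiv:2403.09585 — 7 statements merged into one kernel-verified Lean document; each statement's English description precedes it below -/
import Mathlib

section
/- If the natural numbers are partitioned into finitely many cells N = C₁ ∪ ... ∪ C_r, then there exist an index i and an injective sequence ⟨xₙ⟩ in N such that every finite sum ∑_{t∈H} x_t (over nonempty finite sets H of indices) lies in C_i. -/
open Finset

/-- Finite sums of a sequence over nonempty finite index sets. -/
def FS (x : ℕ → ℕ) : Set ℕ :=
  {s | ∃ H : Finset ℕ, H.Nonempty ∧ s = ∑ t ∈ H, x t}

/-- Finite products of a sequence over nonempty finite index sets. -/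
def FP (x : ℕ → ℕ) : Set ℕ :=
  {s | ∃ H : Finset ℕ, H.Nonempty ∧ s = ∏ t ∈ H, x t}

/-- Block-ordered: every element of `H n` is below every element of `H (n+1)`. -/
def Blocked (H : ℕ → Finset ℕ) : Prop :=
  ∀ n, ∀ a ∈ H n, ∀ b ∈ H (n + 1), a < b

/-- `y` is a sum subsystem of `x`. -/
def SumSubsystem (x y : ℕ → ℕ) : Prop :=
  ∃ H : ℕ → Finset ℕ, (∀ n, (H n).Nonempty) ∧ Blocked H ∧
    ∀ n, y n = ∑ t ∈ H n, x t

/-- `y` is a product subsystem of `x`. -/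
def ProdSubsystem (x y : ℕ → ℕ) : Prop :=
  ∃ H : ℕ → Finset ℕ, (∀ n, (H n).Nonempty) ∧ Blocked H ∧
    ∀ n, y n = ∏ t ∈ H n, x t

/-- Additive IP set. -/
def AIP (A : Set ℕ) : Prop :=
  ∃ x : ℕ → ℕ, (∀ n, 0 < x n) ∧ FS x ⊆ A

/-- Additive IP* set. -/
def AIPStar (A : Set ℕ) : Prop :=
  ∀ B : Set ℕ, AIP B → (A ∩ B).Nonempty

/-- Multiplicative IP set. -/
def MIP (A : Set ℕ) : Prop :=
  ∃ x : ℕ → ℕ, (∀ n, 0 < x n) ∧ FP x ⊆ A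

/-- Multiplicative IP* set. -/
def MIPStar (A : Set ℕ) : Prop :=
  ∀ B : Set ℕ, MIP B → (A ∩ B).Nonempty

lemma FS_pos {a : Stream' ℕ} (ha : ∀ n, 0 < a.get n) {m : ℕ}
    (hm : m ∈ Hindman.FS a) : 0 < m := by
  induction hm with
  | head' a => exact ha 0
  | tail' a m h ih => exact ih (fun n => ha (n + 1))
  | cons' a m h ih => exact Nat.lt_of_lt_of_le (ih (fun n => ha (n + 1))) (Nat.le_add_left _ _)

theorem hindman_finite_sums (r : ℕ) (C : Fin r → Set ℕ)
    (hcover : ∀ n : ℕ, ∃ i, n ∈ C i) :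
    ∃ (i : Fin r) (x : ℕ → ℕ), Function.Injective x ∧
      ∀ H : Finset ℕ, H.Nonempty → (∑ t ∈ H, x t) ∈ C i := by
  set a : Stream' ℕ := fun _ => 1 with ha
  have hapos : ∀ n, 0 < a.get n := fun n => Nat.one_pos
  obtain ⟨c, ⟨i, rfl⟩, b, hb⟩ := Hindman.FS_partition_regular a
      (Set.range fun i => C i \ {0})
      (Set.finite_range _)
      (by
        intro m hm
        obtain ⟨i, hi⟩ := hcover m
        exact ⟨C i \ {0}, ⟨i, rfl⟩, hi, (FS_pos hapos hm).ne'⟩)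
  have hbpos : ∀ n, 0 < b.get n := fun n => by
    have := hb (Hindman.FS.singleton b n)
    exact Nat.pos_of_ne_zero this.2
  -- block boundaries
  let c : ℕ → ℕ := fun n => Nat.rec 0 (fun k ck => ck + (∑ t ∈ range ck, b.get t) + 1) n
  have hc : ∀ n, c (n + 1) = c n + (∑ t ∈ range (c n), b.get t) + 1 := fun n => rfl
  have hcmono : StrictMono c := strictMono_nat_of_lt_succ fun n => by
    rw [hc]; omega
  set x : ℕ → ℕ := fun n => ∑ t ∈ Ico (c n) (c (n + 1)), b.get t with hx
  have hxge : ∀ n, (∑ t ∈ range (c n), b.get t) + 1 ≤ x n := by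
    intro n
    calc (∑ t ∈ range (c n), b.get t) + 1 = (Ico (c n) (c (n+1))).card := by
          rw [Nat.card_Ico, hc]; omega
      _ = ∑ t ∈ Ico (c n) (c (n+1)), 1 := by simp
      _ ≤ x n := Finset.sum_le_sum fun t _ => hbpos t
  have hxmono : StrictMono x := strictMono_nat_of_lt_succ fun n => by
    have h1 := hxge (n + 1)
    have h2 : x n ≤ ∑ t ∈ range (c (n + 1)), b.get t := by
      rw [hx]
      refine Finset.sum_le_sum_of_subset ?_
      intro t ht
      simp only [mem_Ico, mem_range] at *
      omega
    omega
  refine ⟨i, x, hxmono.injective, fun H hH => ?_⟩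
  have hdisj : (H : Set ℕ).PairwiseDisjoint fun n => Ico (c n) (c (n + 1)) := by
    intro m _ n _ hmn
    apply Finset.disjoint_left.mpr
    intro t htm htn
    simp only [mem_Ico] at htm htn
    rcases lt_or_gt_of_ne hmn with h | h
    · have := hcmono.monotone (show _ + 1 ≤ _ from h)
      omega
    · have := hcmono.monotone (show _ + 1 ≤ _ from h)
      omega
  have hsum : ∑ t ∈ H, x t = ∑ t ∈ H.biUnion fun n => Ico (c n) (c (n + 1)), b.get t :=
    (Finset.sum_biUnion hdisj).symm
  have hne : (H.biUnion fun n => Ico (c n) (c (n + 1))).Nonempty := by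
    obtain ⟨n, hn⟩ := hH
    exact ⟨c n, Finset.mem_biUnion.mpr ⟨n, hn, by simp [mem_Ico, hcmono (Nat.lt_succ_self n)]⟩⟩
  rw [hsum]
  exact (hb (Hindman.FS.finset_sum b _ hne)).1
end

section
/- If the collection P_f(N) of nonempty finite subsets of N is partitioned into finitely many cells C₁ ∪ ... ∪ C_r, then there exist an index i and a sequence ⟨Kₙ⟩ of pairwise disjoint nonempty finite subsets of N such that every finite union ⋃_{n∈H} Kₙ (H a nonempty finite set of indices) lies in C_i. -/
open Finset

lemma block_dvd (x : ℕ → ℕ) (s k : ℕ) :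
    ∃ a b : ℕ, s ≤ a ∧ a < b ∧ 2 ^ k ∣ ∑ t ∈ Finset.Ico a b, x t := by
  have hm : 0 < 2 ^ k := Nat.pow_pos (by norm_num)
  have hmaps : ∀ j ∈ Finset.range (2 ^ k + 1),
      (∑ t ∈ Finset.Ico s (s + j), x t) % 2 ^ k ∈ Finset.range (2 ^ k) := by
    intro j _
    exact Finset.mem_range.2 (Nat.mod_lt _ hm)
  obtain ⟨j₁, hj₁, j₂, hj₂, hne, heq⟩ :=
    Finset.exists_ne_map_eq_of_card_lt_of_maps_to (by simp) hmaps
  rcases lt_or_gt_of_ne hne with h | h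
  · refine ⟨s + j₁, s + j₂, le_add_right le_rfl, by omega, ?_⟩
    have hsplit := Finset.sum_Ico_consecutive x
      (show s ≤ s + j₁ by omega) (show s + j₁ ≤ s + j₂ by omega)
    have : (∑ t ∈ Finset.Ico s (s + j₁), x t) + ∑ t ∈ Finset.Ico (s + j₁) (s + j₂), x t
        ≡ (∑ t ∈ Finset.Ico s (s + j₁), x t) + 0 [MOD 2 ^ k] := by
      rw [hsplit, add_zero]; exact heq.symm
    have h0 := (Nat.ModEq.add_left_cancel' _ this)
    exact (Nat.modEq_zero_iff_dvd).1 h0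
  · refine ⟨s + j₂, s + j₁, le_add_right le_rfl, by omega, ?_⟩
    have hsplit := Finset.sum_Ico_consecutive x
      (show s ≤ s + j₂ by omega) (show s + j₂ ≤ s + j₁ by omega)
    have : (∑ t ∈ Finset.Ico s (s + j₂), x t) + ∑ t ∈ Finset.Ico (s + j₂) (s + j₁), x t
        ≡ (∑ t ∈ Finset.Ico s (s + j₂), x t) + 0 [MOD 2 ^ k] := by
      rw [hsplit, add_zero]; exact heq
    exact (Nat.modEq_zero_iff_dvd).1 (Nat.ModEq.add_left_cancel' _ this)

lemma fs_pos {a : Stream' ℕ} (ha : ∀ n, 0 < a n) : ∀ m ∈ Hindman.FS a, 0 < m := by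
  intro m hm
  induction hm with
  | head' a => exact ha 0
  | @tail' a m h ih => exact ih (fun n => ha (n + 1))
  | @cons' a m h ih => exact Nat.add_pos_left (ha 0) _

lemma le_of_mem_bitIndices_of_dvd {k y j : ℕ} (h : 2 ^ k ∣ y) (hj : j ∈ y.bitIndices) :
    k ≤ j := by
  obtain ⟨q, rfl⟩ := h
  rw [Nat.bitIndices_two_pow_mul] at hj
  obtain ⟨i, _, rfl⟩ := List.mem_map.1 hj
  omega

lemma lt_of_mem_bitIndices {y j : ℕ} (hj : j ∈ y.bitIndices) : j < y :=
  lt_of_lt_of_le (Nat.lt_two_pow_self (n := j)) (Nat.two_pow_le_of_mem_bitIndices hj)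

theorem hindman_finite_unions (r : ℕ) (C : Fin r → Set (Finset ℕ))
    (hcover : ∀ K : Finset ℕ, K.Nonempty → ∃ i, K ∈ C i) :
    ∃ (i : Fin r) (K : ℕ → Finset ℕ),
      (∀ n, (K n).Nonempty) ∧
      (∀ m n, m ≠ n → Disjoint (K m) (K n)) ∧
      ∀ H : Finset ℕ, H.Nonempty → H.biUnion K ∈ C i := by
  classical
  set D : Fin r → Set ℕ := fun i => {n | 0 < n ∧ n.bitIndices.toFinset ∈ C i} with hDdef
  have hcov : Hindman.FS ((fun n => 2 ^ n) : Stream' ℕ) ⊆ ⋃₀ Set.range D := by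
    intro m hm
    have hmpos : 0 < m := fs_pos (fun n => Nat.pow_pos (by norm_num)) m hm
    have hne : m.bitIndices.toFinset.Nonempty := by
      rw [Finset.nonempty_iff_ne_empty]
      intro h
      have := Finset.twoPowSum_toFinset_bitIndices m
      rw [h, Finset.sum_empty] at this
      omega
    obtain ⟨i, hi⟩ := hcover _ hne
    exact ⟨D i, ⟨i, rfl⟩, hmpos, hi⟩
  obtain ⟨c, ⟨i, rfl⟩, x, hx⟩ :=
    Hindman.FS_partition_regular ((fun n => 2 ^ n) : Stream' ℕ) (Set.range D)
      (Set.finite_range D) hcov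
  have xpos : ∀ n, 0 < x n := fun n => (hx (Hindman.FS.singleton x n)).1
  choose A B hA hAB hdvd using block_dvd x
  -- iterative block construction
  let step : ℕ × Finset ℕ → ℕ × Finset ℕ := fun p =>
    (B p.1 (∑ t ∈ p.2, x t), Finset.Ico (A p.1 (∑ t ∈ p.2, x t)) (B p.1 (∑ t ∈ p.2, x t)))
  let st : ℕ → ℕ × Finset ℕ := fun n => Nat.rec (step (0, ∅)) (fun _ p => step p) n
  let Bl : ℕ → Finset ℕ := fun n => (st n).2
  let y : ℕ → ℕ := fun n => ∑ t ∈ Bl n, x t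
  have hstep2 : ∀ p : ℕ × Finset ℕ,
      (step p).2 = Finset.Ico (A p.1 (∑ t ∈ p.2, x t)) (B p.1 (∑ t ∈ p.2, x t)) := fun _ => rfl
  have hblock : ∀ n, ∃ a b, a < b ∧ st n = (b, Finset.Ico a b) := by
    intro n
    cases n with
    | zero => exact ⟨_, _, hAB _ _, rfl⟩
    | succ n => exact ⟨_, _, hAB _ _, rfl⟩
  have hBl_lt_fst : ∀ n, ∀ u ∈ Bl n, u < (st n).1 := by
    intro n u hu
    obtain ⟨a, b, hab, he⟩ := hblock n
    have h2 : Bl n = Finset.Ico a b := by rw [show Bl n = (st n).2 from rfl, he]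
    rw [h2, Finset.mem_Ico] at hu
    rw [he]
    exact hu.2
  have hfst_le : ∀ n, ∀ v ∈ Bl (n + 1), (st n).1 ≤ v := by
    intro n v hv
    have h2 : Bl (n + 1) = Finset.Ico (A (st n).1 (∑ t ∈ (st n).2, x t))
        (B (st n).1 (∑ t ∈ (st n).2, x t)) := rfl
    rw [h2, Finset.mem_Ico] at hv
    exact le_trans (hA _ _) hv.1
  have hBlne : ∀ n, (Bl n).Nonempty := by
    intro n
    obtain ⟨a, b, hab, he⟩ := hblock n
    rw [show Bl n = (st n).2 from rfl, he]
    exact Finset.nonempty_Ico.2 hab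
  have hfst_mono : Monotone fun n => (st n).1 := by
    apply monotone_nat_of_le_succ
    intro n
    obtain ⟨v, hv⟩ := hBlne (n + 1)
    exact le_trans (hfst_le n v hv) (le_of_lt (hBl_lt_fst (n + 1) v hv))
  have hord : ∀ m n, m < n → ∀ u ∈ Bl m, ∀ v ∈ Bl n, u < v := by
    intro m n hmn u hu v hv
    obtain ⟨n', rfl⟩ : ∃ n', n = n' + 1 := ⟨n - 1, by omega⟩
    have h1 := hBl_lt_fst m u hu
    have h2 := hfst_le n' v hv
    have h3 : (st m).1 ≤ (st n').1 := hfst_mono (by omega)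
    omega
  have hBldisj : ∀ m n, m ≠ n → Disjoint (Bl m) (Bl n) := by
    intro m n hmn
    rw [Finset.disjoint_left]
    intro u hum hun
    rcases lt_or_gt_of_ne hmn with h | h
    · exact absurd (hord m n h u hum u hun) (lt_irrefl u)
    · exact absurd (hord n m h u hun u hum) (lt_irrefl u)
  have hypos : ∀ n, 0 < y n := fun n => Finset.sum_pos (fun t _ => xpos t) (hBlne n)
  have hydvd : ∀ n, 2 ^ y n ∣ y (n + 1) := by
    intro n
    have : y (n + 1) = ∑ t ∈ Finset.Ico (A (st n).1 (∑ t ∈ (st n).2, x t))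
        (B (st n).1 (∑ t ∈ (st n).2, x t)), x t := rfl
    rw [this]
    exact hdvd _ _
  have hymono : StrictMono y := by
    apply strictMono_nat_of_lt_succ
    intro n
    calc y n < 2 ^ y n := Nat.lt_two_pow_self
    _ ≤ y (n + 1) := Nat.le_of_dvd (hypos (n + 1)) (hydvd n)
  set K : ℕ → Finset ℕ := fun n => (y n).bitIndices.toFinset with hKdef
  have hKsum : ∀ n, ∑ j ∈ K n, 2 ^ j = y n := fun n =>
    Finset.twoPowSum_toFinset_bitIndices (y n)
  have hKne : ∀ n, (K n).Nonempty := by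
    intro n
    rw [Finset.nonempty_iff_ne_empty]
    intro h
    have := hKsum n
    rw [h, Finset.sum_empty] at this
    exact absurd this.symm (Nat.ne_of_gt (hypos n))
  have hKub : ∀ n, ∀ j ∈ K n, j < y n := fun n j hj =>
    lt_of_mem_bitIndices (List.mem_toFinset.1 hj)
  have hKlb : ∀ n, ∀ j ∈ K (n + 1), y n ≤ j := fun n j hj =>
    le_of_mem_bitIndices_of_dvd (hydvd n) (List.mem_toFinset.1 hj)
  have hKord : ∀ m n, m < n → ∀ j ∈ K m, ∀ j' ∈ K n, j < j' := by
    intro m n hmn j hj j' hj'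
    obtain ⟨n', rfl⟩ : ∃ n', n = n' + 1 := ⟨n - 1, by omega⟩
    have h1 := hKub m j hj
    have h2 := hKlb n' j' hj'
    have h3 : y m ≤ y n' := hymono.monotone (by omega)
    omega
  have hKdisj : ∀ m n, m ≠ n → Disjoint (K m) (K n) := by
    intro m n hmn
    rw [Finset.disjoint_left]
    intro j hm' hn'
    rcases lt_or_gt_of_ne hmn with h | h
    · exact absurd (hKord m n h j hm' j hn') (lt_irrefl j)
    · exact absurd (hKord n m h j hn' j hm') (lt_irrefl j)
  refine ⟨i, K, hKne, hKdisj, ?_⟩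
  intro H hH
  have hpd : (↑H : Set ℕ).PairwiseDisjoint K := fun a _ b _ hab => hKdisj a b hab
  have hpdB : (↑H : Set ℕ).PairwiseDisjoint Bl := fun a _ b _ hab => hBldisj a b hab
  have hz : ∑ j ∈ H.biUnion K, 2 ^ j = ∑ n ∈ H, y n := by
    rw [Finset.sum_biUnion hpd]
    exact Finset.sum_congr rfl fun n _ => hKsum n
  have hzx : ∑ n ∈ H, y n = ∑ t ∈ H.biUnion Bl, x t := by
    exact (Finset.sum_biUnion hpdB).symm
  have hbne : (H.biUnion Bl).Nonempty := by
    obtain ⟨n, hn⟩ := hH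
    obtain ⟨t, ht⟩ := hBlne n
    exact ⟨t, Finset.mem_biUnion.2 ⟨n, hn, ht⟩⟩
  have hmemFS : (∑ n ∈ H, y n) ∈ Hindman.FS x := by
    rw [hzx]
    exact Hindman.FS.finset_sum x _ hbne
  have hDi := hx hmemFS
  have hfin : (∑ n ∈ H, y n).bitIndices.toFinset ∈ C i := hDi.2
  have hU : H.biUnion K = (∑ n ∈ H, y n).bitIndices.toFinset := by
    rw [← hz, Finset.toFinset_bitIndices_twoPowSum]
  rw [hU]
  exact hfin
end

section
/- If P_f(N) is partitioned into finitely many cells C₁ ∪ ... ∪ C_r, then there exist an index i and a sequence ⟨Hₙ⟩ of nonempty finite subsets of N with max Hₙ < min H_{n+1} for all n, such that every finite union of the Hₙ lies in C_i. -/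
open Finset

theorem FS_pos_aux : ∀ {a : Stream' ℕ} {m : ℕ}, m ∈ Hindman.FS a → (∀ n, 0 < a.get n) → 0 < m := by
  intro a m hm
  induction hm with
  | head' a => exact fun ha => ha 0
  | tail' a m h ih => exact fun ha => ih fun n => ha (n + 1)
  | cons' a m h ih => exact fun ha => Nat.add_pos_left (ha 0) _

theorem sum_range_two_pow_lt (m : ℕ) : ∑ i ∈ Finset.range m, 2 ^ i < 2 ^ m := by
  induction m with
  | zero => simp
  | succ m ih => rw [Finset.sum_range_succ, pow_succ]; omega

theorem le_of_two_pow_dvd_mem_bitIndices {m z c : ℕ} (hz : 2 ^ m ∣ z)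
    (hc : c ∈ z.bitIndices.toFinset) : m ≤ c := by
  by_contra hcm
  push_neg at hcm
  set S := z.bitIndices.toFinset with hS
  have hzsum : ∑ a ∈ S, 2 ^ a = z := Finset.twoPowSum_toFinset_bitIndices z
  have hsplit : ∑ a ∈ S.filter (· < m), 2 ^ a + ∑ a ∈ S.filter (¬ · < m), 2 ^ a = z := by
    rw [Finset.sum_filter_add_sum_filter_not, hzsum]
  have hhigh : 2 ^ m ∣ ∑ a ∈ S.filter (¬ · < m), 2 ^ a := by
    refine Finset.dvd_sum fun a ha => pow_dvd_pow 2 ?_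
    simp only [Finset.mem_filter] at ha; omega
  have hlowdvd : 2 ^ m ∣ ∑ a ∈ S.filter (· < m), 2 ^ a := by
    have := Nat.dvd_sub hz hhigh
    rwa [show z - ∑ a ∈ S.filter (¬ · < m), 2 ^ a = ∑ a ∈ S.filter (· < m), 2 ^ a by omega] at this
  have hlowpos : 0 < ∑ a ∈ S.filter (· < m), 2 ^ a := by
    refine Finset.sum_pos' (fun a _ => Nat.zero_le _) ⟨c, ?_, Nat.pow_pos (by norm_num)⟩
    exact Finset.mem_filter.2 ⟨hc, hcm⟩
  have hlowlt : ∑ a ∈ S.filter (· < m), 2 ^ a < 2 ^ m := by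
    calc ∑ a ∈ S.filter (· < m), 2 ^ a ≤ ∑ a ∈ Finset.range m, 2 ^ a := by
          refine Finset.sum_le_sum_of_subset fun a ha => ?_
          simp only [Finset.mem_filter] at ha
          exact Finset.mem_range.2 ha.2
      _ < 2 ^ m := sum_range_two_pow_lt m
  exact absurd (Nat.le_of_dvd hlowpos hlowdvd) (by omega)

theorem bitIndices_toFinset_nonempty {z : ℕ} (hz : 0 < z) : z.bitIndices.toFinset.Nonempty := by
  rw [Finset.nonempty_iff_ne_empty]
  intro h
  have := Finset.twoPowSum_toFinset_bitIndices z
  rw [h] at this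
  simp at this
  omega

theorem hindman_finite_unions_blocked (r : ℕ) (C : Fin r → Set (Finset ℕ))
    (hcover : ∀ K : Finset ℕ, K.Nonempty → ∃ i, K ∈ C i) :
    ∃ (i : Fin r) (H : ℕ → Finset ℕ),
      (∀ n, (H n).Nonempty) ∧ Blocked H ∧
      ∀ G : Finset ℕ, G.Nonempty → G.biUnion H ∈ C i := by
  classical
  set D : Fin r → Set ℕ := fun i => {n | 0 < n ∧ n.bitIndices.toFinset ∈ C i} with hD
  have hcov : Hindman.FS (Stream'.const 1) ⊆ ⋃₀ Set.range D := by
    intro m hm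
    have hmpos : 0 < m := FS_pos_aux hm fun n => Nat.one_pos
    obtain ⟨i, hi⟩ := hcover _ (bitIndices_toFinset_nonempty hmpos)
    exact ⟨D i, ⟨i, rfl⟩, hmpos, hi⟩
  obtain ⟨c, hc, b, hb⟩ :=
    Hindman.FS_partition_regular (Stream'.const 1) (Set.range D) (Set.finite_range D) hcov
  obtain ⟨i, rfl⟩ := hc
  -- pigeonhole: long divisible blocks
  have key : ∀ N m : ℕ, ∃ p : ℕ × ℕ,
      N ≤ p.1 ∧ p.1 < p.2 ∧ 2 ^ m ∣ ∑ t ∈ Finset.Ico p.1 p.2, b.get t := by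
    intro N m
    set S : ℕ → ℕ := fun j => ∑ t ∈ Finset.Ico N (N + j), b.get t with hS
    have main : ∀ j k : ℕ, j < k → S j % 2 ^ m = S k % 2 ^ m →
        ∃ p : ℕ × ℕ, N ≤ p.1 ∧ p.1 < p.2 ∧ 2 ^ m ∣ ∑ t ∈ Finset.Ico p.1 p.2, b.get t := by
      intro j k hjk hmod
      refine ⟨(N + j, N + k), Nat.le_add_right _ _, by omega, ?_⟩
      have hsplit : S j + ∑ t ∈ Finset.Ico (N + j) (N + k), b.get t = S k :=
        Finset.sum_Ico_consecutive _ (by omega) (by omega)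
      have h1 : S j + ∑ t ∈ Finset.Ico (N + j) (N + k), b.get t ≡ S j + 0 [MOD 2 ^ m] := by
        rw [hsplit, add_zero]; exact hmod.symm
      exact Nat.modEq_zero_iff_dvd.1 (Nat.ModEq.add_left_cancel' _ h1)
    have : ∃ j ∈ Finset.range (2 ^ m + 1), ∃ k ∈ Finset.range (2 ^ m + 1),
        j ≠ k ∧ S j % 2 ^ m = S k % 2 ^ m := by
      apply Finset.exists_ne_map_eq_of_card_lt_of_maps_to (t := Finset.range (2 ^ m))
      · simp
      · intro a _
        exact Finset.mem_range.2 (Nat.mod_lt _ (Nat.pow_pos (by norm_num)))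
    obtain ⟨j, -, k, -, hjk, hmod⟩ := this
    rcases Nat.lt_or_ge j k with h | h
    · exact main j k h hmod
    · exact main k j (by omega) hmod.symm
  choose f hf1 hf2 hf3 using key
  -- recursive block construction
  set g : ℕ → ℕ × ℕ := fun n => Nat.rec (f 0 0)
    (fun _ p => f p.2
      (((∑ t ∈ Finset.Ico p.1 p.2, b.get t).bitIndices.toFinset.sup id) + 1)) n with hg
  set z : ℕ → ℕ := fun n => ∑ t ∈ Finset.Ico (g n).1 (g n).2, b.get t with hz
  set H : ℕ → Finset ℕ := fun n => (z n).bitIndices.toFinset with hH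
  have hlt : ∀ n, (g n).1 < (g n).2 := by
    intro n; cases n with
    | zero => exact hf2 0 0
    | succ n => exact hf2 _ _
  have hnext : ∀ n, (g n).2 ≤ (g (n + 1)).1 := fun n => hf1 _ _
  have hdvd : ∀ n, 2 ^ ((H n).sup id + 1) ∣ z (n + 1) := fun n => hf3 _ _
  have hzFS : ∀ n, z n ∈ Hindman.FS b :=
    fun n => Hindman.FS.finset_sum b _ (Finset.nonempty_Ico.2 (hlt n))
  have hzpos : ∀ n, 0 < z n := fun n => (hb (hzFS n)).1
  have hHne : ∀ n, (H n).Nonempty := fun n => bitIndices_toFinset_nonempty (hzpos n)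
  have hBlocked : ∀ n, ∀ a ∈ H n, ∀ c ∈ H (n + 1), a < c := by
    intro n a ha c hc
    have h1 : a ≤ (H n).sup id := Finset.le_sup (f := id) ha
    have h2 : (H n).sup id + 1 ≤ c := le_of_two_pow_dvd_mem_bitIndices (hdvd n) hc
    omega
  have hmono : ∀ n m, m < n → ∀ a ∈ H m, ∀ c ∈ H n, a < c := by
    intro n
    induction n with
    | zero => omega
    | succ n ih =>
      intro m hm a ha c hc
      rcases Nat.lt_succ_iff_lt_or_eq.1 hm with h | rfl
      · obtain ⟨d, hd⟩ := hHne n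
        exact (ih m h a ha d hd).trans (hBlocked n d hd c hc)
      · exact hBlocked m a ha c hc
  have hIco : ∀ n m, m < n → (g m).2 ≤ (g n).1 := by
    intro n
    induction n with
    | zero => omega
    | succ n ih =>
      intro m hm
      rcases Nat.lt_succ_iff_lt_or_eq.1 hm with h | rfl
      · exact le_trans (ih m h) (le_trans (hlt n).le (hnext n))
      · exact hnext m
  refine ⟨i, H, hHne, hBlocked, ?_⟩
  intro G hG
  have hdisjI : (↑G : Set ℕ).PairwiseDisjoint fun n => Finset.Ico (g n).1 (g n).2 := by
    intro x _ y _ hxy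
    refine Finset.disjoint_left.2 fun t ht ht' => ?_
    simp only [Finset.mem_Ico] at ht ht'
    rcases Nat.lt_or_ge x y with h | h
    · have := hIco y x h; omega
    · have := hIco x y (by omega); omega
  have hdisjH : (↑G : Set ℕ).PairwiseDisjoint H := by
    intro x _ y _ hxy
    refine Finset.disjoint_left.2 fun t ht ht' => ?_
    rcases Nat.lt_or_ge x y with h | h
    · exact absurd (hmono y x h t ht t ht') (lt_irrefl t)
    · exact absurd (hmono x y (by omega) t ht' t ht) (lt_irrefl t)
  have hsum1 : ∑ n ∈ G, z n =
      ∑ t ∈ G.biUnion (fun n => Finset.Ico (g n).1 (g n).2), b.get t :=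
    (Finset.sum_biUnion hdisjI).symm
  have hsum2 : ∑ n ∈ G, z n = ∑ a ∈ G.biUnion H, 2 ^ a := by
    rw [Finset.sum_biUnion hdisjH]
    refine Finset.sum_congr rfl fun n _ => ?_
    exact (Finset.twoPowSum_toFinset_bitIndices (z n)).symm
  have hFSsum : (∑ n ∈ G, z n) ∈ Hindman.FS b := by
    rw [hsum1]
    refine Hindman.FS.finset_sum b _ ?_
    obtain ⟨n, hn⟩ := hG
    exact Finset.Nonempty.mono (Finset.subset_biUnion_of_mem _ hn)
      (Finset.nonempty_Ico.2 (hlt n))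
  have := (hb hFSsum).2
  rwa [show (∑ n ∈ G, z n).bitIndices.toFinset = G.biUnion H by
    rw [hsum2, Finset.toFinset_bitIndices_twoPowSum]] at this
end

section
/- Let ⟨xₙ⟩ be a sequence in N and suppose FS(⟨xₙ⟩) is partitioned into finitely many cells C₁ ∪ ... ∪ C_r. Then there exist an index i and a sum subsystem ⟨yₙ⟩ of ⟨xₙ⟩ such that FS(⟨yₙ⟩) ⊆ C_i. -/
open Finset

-- aux


open Finset Filter

attribute [local instance] Ultrafilter.add Ultrafilter.addSemigroup

/-- Finite sums with all indices at least `n`. -/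
def FSb (x : ℕ → ℕ) (n : ℕ) : Set ℕ :=
  {s | ∃ H : Finset ℕ, H.Nonempty ∧ (∀ t ∈ H, n ≤ t) ∧ s = ∑ t ∈ H, x t}

lemma FSb_anti (x : ℕ → ℕ) {n m : ℕ} (h : n ≤ m) : FSb x m ⊆ FSb x n := by
  rintro s ⟨H, hne, hlo, rfl⟩
  exact ⟨H, hne, fun t ht => le_trans h (hlo t ht), rfl⟩

lemma FSb_add {x : ℕ → ℕ} {n : ℕ} {a : ℕ} {H : Finset ℕ} (hne : H.Nonempty)
    (hlo : ∀ t ∈ H, n ≤ t) (ha : a = ∑ t ∈ H, x t) {b : ℕ}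
    (hb : b ∈ FSb x (H.max' hne + 1)) : a + b ∈ FSb x n := by
  obtain ⟨K, hKne, hKlo, rfl⟩ := hb
  have hdisj : Disjoint H K := by
    rw [Finset.disjoint_left]
    intro t htH htK
    have h1 : t ≤ H.max' hne := Finset.le_max' H t htH
    have h2 : H.max' hne + 1 ≤ t := hKlo t htK
    omega
  refine ⟨H ∪ K, hne.mono Finset.subset_union_left, ?_, ?_⟩
  · intro t ht
    rcases Finset.mem_union.mp ht with h | h
    · exact hlo t h
    · have := hKlo t h
      have := hlo _ (H.max'_mem hne)
      have := Finset.le_max' H _ (H.max'_mem hne)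
      omega
  · rw [Finset.sum_union hdisj, ha]

lemma exists_idem_FSb (x : ℕ → ℕ) :
    ∃ U : Ultrafilter ℕ, U + U = U ∧ ∀ n, FSb x n ∈ U := by
  let S : Set (Ultrafilter ℕ) := ⋂ n, { U | ∀ᶠ m in U, m ∈ FSb x n }
  have h := exists_idempotent_in_compact_add_subsemigroup ?_ S ?_ ?_ ?_
  · rcases h with ⟨U, hU, U_idem⟩
    refine ⟨U, U_idem, fun n => ?_⟩
    have := Set.mem_iInter.mp hU n
    exact eventually_mem_set.mp this
  · exact Ultrafilter.continuous_add_left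
  · apply IsCompact.nonempty_iInter_of_sequence_nonempty_isCompact_isClosed
    · intro n U hU
      filter_upwards [hU] with m hm
      exact FSb_anti x (Nat.le_succ n) hm
    · intro n
      exact ⟨pure (x n), mem_pure.mpr ⟨{n}, Finset.singleton_nonempty n,
        by simp, by simp⟩⟩
    · exact (ultrafilter_isClosed_basic _).isCompact
    · intro n
      apply ultrafilter_isClosed_basic
  · exact IsClosed.isCompact (isClosed_iInter fun i => ultrafilter_isClosed_basic _)
  · intro U hU V hV
    rw [Set.mem_iInter] at *
    intro n
    rw [Set.mem_setOf_eq, Ultrafilter.eventually_add]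
    filter_upwards [hU n] with m hm
    obtain ⟨H, hne, hlo, hsum⟩ := hm
    filter_upwards [hV (H.max' hne + 1)] with m' hm'
    exact FSb_add hne hlo hsum hm'

lemma step (x : ℕ → ℕ) (U : Ultrafilter ℕ) (hidem : U + U = U) (hFS : ∀ n, FSb x n ∈ U)
    (s : Set ℕ) (hs : s ∈ U) (n : ℕ) :
    ∃ a H, H.Nonempty ∧ (∀ t ∈ H, n ≤ t) ∧ a = ∑ t ∈ H, x t ∧ a ∈ s ∧
      s ∩ {m | a + m ∈ s} ∈ U := by
  have h1 : {m | ∀ᶠ m' in U, m + m' ∈ s} ∈ U := by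
    have hs2 : s ∈ U + U := by rw [hidem]; exact hs
    have := (Ultrafilter.eventually_add U U (· ∈ s)).mp (eventually_mem_set.mpr hs2)
    exact eventually_mem_set.mp (by simpa using this)
  have h2 : (s ∩ ({m | ∀ᶠ m' in U, m + m' ∈ s} ∩ FSb x n)) ∈ U :=
    inter_mem hs (inter_mem h1 (hFS n))
  obtain ⟨a, has, haev, H, hne, hlo, hsum⟩ := U.nonempty_of_mem h2
  exact ⟨a, H, hne, hlo, hsum, has, inter_mem hs (eventually_mem_set.mp haev)⟩

section
variable (x : ℕ → ℕ) (U : Ultrafilter ℕ) (hidem : U + U = U) (hFS : ∀ n, FSb x n ∈ U)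
  (s0 : Set ℕ) (hs0 : s0 ∈ U)

noncomputable def chain : ℕ → {p : Set ℕ × ℕ // p.1 ∈ U}
  | 0 => ⟨(s0, 0), hs0⟩
  | k + 1 =>
    let p := chain k
    let st := step x U hidem hFS p.1.1 p.2 p.1.2
    ⟨(p.1.1 ∩ {m | st.choose + m ∈ p.1.1},
      st.choose_spec.choose.max' st.choose_spec.choose_spec.1 + 1),
      st.choose_spec.choose_spec.2.2.2.2⟩

noncomputable def elemOf (k : ℕ) : ℕ :=
  (step x U hidem hFS (chain x U hidem hFS s0 hs0 k).1.1 (chain x U hidem hFS s0 hs0 k).2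
    (chain x U hidem hFS s0 hs0 k).1.2).choose

noncomputable def suppOf (k : ℕ) : Finset ℕ :=
  (step x U hidem hFS (chain x U hidem hFS s0 hs0 k).1.1 (chain x U hidem hFS s0 hs0 k).2
    (chain x U hidem hFS s0 hs0 k).1.2).choose_spec.choose

lemma chain_spec (k : ℕ) :
    (suppOf x U hidem hFS s0 hs0 k).Nonempty ∧
    (∀ t ∈ suppOf x U hidem hFS s0 hs0 k, (chain x U hidem hFS s0 hs0 k).1.2 ≤ t) ∧
    elemOf x U hidem hFS s0 hs0 k = ∑ t ∈ suppOf x U hidem hFS s0 hs0 k, x t ∧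
    elemOf x U hidem hFS s0 hs0 k ∈ (chain x U hidem hFS s0 hs0 k).1.1 ∧
    (chain x U hidem hFS s0 hs0 (k+1)).1.1 =
      (chain x U hidem hFS s0 hs0 k).1.1 ∩
        {m | elemOf x U hidem hFS s0 hs0 k + m ∈ (chain x U hidem hFS s0 hs0 k).1.1} ∧
    ∀ t ∈ suppOf x U hidem hFS s0 hs0 k, t < (chain x U hidem hFS s0 hs0 (k+1)).1.2 := by
  obtain ⟨h1, h2, h3, h4, h5⟩ :=
    (step x U hidem hFS (chain x U hidem hFS s0 hs0 k).1.1 (chain x U hidem hFS s0 hs0 k).2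
      (chain x U hidem hFS s0 hs0 k).1.2).choose_spec.choose_spec
  refine ⟨h1, h2, h3, h4, rfl, ?_⟩
  intro t ht
  have : t ≤ (suppOf x U hidem hFS s0 hs0 k).max' h1 := Finset.le_max' _ t ht
  have hn : (chain x U hidem hFS s0 hs0 (k+1)).1.2 =
      (suppOf x U hidem hFS s0 hs0 k).max' h1 + 1 := rfl
  omega

lemma chain_subset {j k : ℕ} (h : j ≤ k) :
    (chain x U hidem hFS s0 hs0 k).1.1 ⊆ (chain x U hidem hFS s0 hs0 j).1.1 := by
  induction k with
  | zero =>
    obtain rfl : j = 0 := Nat.le_zero.mp h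
    rfl
  | succ k ih =>
    rcases Nat.lt_or_ge j (k+1) with h' | h'
    · have := (chain_spec x U hidem hFS s0 hs0 k).2.2.2.2.1
      rw [this]
      exact (Set.inter_subset_left).trans (ih (by omega))
    · have : j = k + 1 := by omega
      subst this; rfl

lemma sum_mem_chain (K : Finset ℕ) (hK : K.Nonempty) :
    ∑ k ∈ K, elemOf x U hidem hFS s0 hs0 k ∈
      (chain x U hidem hFS s0 hs0 (K.min' hK)).1.1 := by
  induction K using Finset.strongInduction with
  | _ K ih =>
  set j := K.min' hK with hj
  rcases (K.erase j).eq_empty_or_nonempty with h | h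
  · have hKj : K = {j} := by
      apply Finset.eq_singleton_iff_unique_mem.mpr
      refine ⟨K.min'_mem hK, fun b hb => ?_⟩
      by_contra hne
      have : b ∈ K.erase j := Finset.mem_erase.mpr ⟨hne, hb⟩
      rw [h] at this
      simp at this
    rw [hKj, Finset.sum_singleton]
    exact (chain_spec x U hidem hFS s0 hs0 j).2.2.2.1
  · have hsum : elemOf x U hidem hFS s0 hs0 j +
        ∑ k ∈ K.erase j, elemOf x U hidem hFS s0 hs0 k =
        ∑ k ∈ K, elemOf x U hidem hFS s0 hs0 k :=
      Finset.add_sum_erase _ _ (K.min'_mem hK)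
    have hlt : j < (K.erase j).min' h :=
      Finset.min'_lt_of_mem_erase_min' _ _ (Finset.min'_mem _ h)
    have ihm := ih (K.erase j) (Finset.erase_ssubset (K.min'_mem hK)) h
    have h2 : ∑ k ∈ K.erase j, elemOf x U hidem hFS s0 hs0 k ∈
        (chain x U hidem hFS s0 hs0 (j+1)).1.1 :=
      chain_subset x U hidem hFS s0 hs0 (by omega) ihm
    rw [(chain_spec x U hidem hFS s0 hs0 j).2.2.2.2.1] at h2
    rw [← hsum]
    exact h2.2

end

theorem sum_subsystem_partition (x : ℕ → ℕ) (r : ℕ) (C : Fin r → Set ℕ)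
    (hcover : ∀ s ∈ FS x, ∃ i, s ∈ C i) :
    ∃ (i : Fin r) (y : ℕ → ℕ), SumSubsystem x y ∧ FS y ⊆ C i := by
  obtain ⟨U, hidem, hFS⟩ := exists_idem_FSb x
  have hFSx : FS x ∈ U := by
    refine Filter.mem_of_superset (hFS 0) ?_
    rintro s ⟨H, hne, -, rfl⟩
    exact ⟨H, hne, rfl⟩
  have hcov : FS x ⊆ ⋃₀ Set.range (fun i => C i ∩ FS x) := by
    intro m hm
    obtain ⟨i, hi⟩ := hcover m hm
    exact ⟨C i ∩ FS x, ⟨i, rfl⟩, hi, hm⟩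
  obtain ⟨c, ⟨i, rfl⟩, hc⟩ := (Ultrafilter.finite_sUnion_mem_iff
    (Set.finite_range _)).mp (Filter.mem_of_superset hFSx hcov)
  set s0 := C i ∩ FS x with hs0def
  refine ⟨i, elemOf x U hidem hFS s0 hc, ⟨suppOf x U hidem hFS s0 hc, ?_, ?_, ?_⟩, ?_⟩
  · exact fun k => (chain_spec x U hidem hFS s0 hc k).1
  · intro k a ha b hb
    have h1 : a < (chain x U hidem hFS s0 hc (k+1)).1.2 :=
      (chain_spec x U hidem hFS s0 hc k).2.2.2.2.2 a ha
    have h2 : (chain x U hidem hFS s0 hc (k+1)).1.2 ≤ b :=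
      (chain_spec x U hidem hFS s0 hc (k+1)).2.1 b hb
    omega
  · exact fun k => (chain_spec x U hidem hFS s0 hc k).2.2.1
  · rintro s ⟨K, hK, rfl⟩
    have h1 := sum_mem_chain x U hidem hFS s0 hc K hK
    have h2 : (chain x U hidem hFS s0 hc (K.min' hK)).1.1 ⊆
        (chain x U hidem hFS s0 hc 0).1.1 :=
      chain_subset x U hidem hFS s0 hc (Nat.zero_le _)
    exact (h2 h1).1
end

section
/- If A and B are both AIP* subsets of N, then A ∩ B is an AIP* set. -/
open Finset

lemma hFS_subset_FS (a : Stream' ℕ) : Hindman.FS a ⊆ FS a.get := by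
  intro m hm
  induction hm with
  | head' a => exact ⟨{0}, Finset.singleton_nonempty 0, by simp [Stream'.head]⟩
  | tail' a m h ih =>
      obtain ⟨H, hH, rfl⟩ := ih
      refine ⟨H.map ⟨Nat.succ, Nat.succ_injective⟩, hH.map, ?_⟩
      rw [Finset.sum_map]
      rfl
  | cons' a m h ih =>
      obtain ⟨H, hH, rfl⟩ := ih
      refine ⟨insert 0 (H.map ⟨Nat.succ, Nat.succ_injective⟩), Finset.insert_nonempty _ _, ?_⟩
      rw [Finset.sum_insert (by simp), Finset.sum_map]
      rfl

lemma FS_pos_s7 {x : ℕ → ℕ} (hx : ∀ n, 0 < x n) {m : ℕ} (hm : m ∈ FS x) : 0 < m := by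
  obtain ⟨H, hH, rfl⟩ := hm
  exact Finset.sum_pos (fun i _ => hx i) hH

theorem aipstar_inter (A B : Set ℕ) (hA : AIPStar A) (hB : AIPStar B) :
    AIPStar (A ∩ B) := by
  intro C hC
  obtain ⟨x, hxpos, hxC⟩ := hC
  let a : Stream' ℕ := x
  obtain ⟨U, hidem, hmem⟩ := Hindman.exists_idempotent_ultrafilter_le_FS a
  have hFSx : Hindman.FS a ⊆ C := fun m hm => hxC (hFS_subset_FS a hm)
  have hmem' : {m | m ∈ Hindman.FS a} ∈ U := hmem
  have key : ∀ D : Set ℕ, AIPStar D → D ∈ U := by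
    intro D hD
    by_contra hDU
    have hc : Dᶜ ∈ U := Ultrafilter.compl_mem_iff_notMem.mpr hDU
    have h2 : Dᶜ ∩ {m | m ∈ Hindman.FS a} ∈ U := Filter.inter_mem hc hmem'
    obtain ⟨b, hb⟩ := Hindman.exists_FS_of_large U hidem _ h2
    have hbpos : ∀ n, 0 < b.get n := fun n =>
      FS_pos_s7 hxpos (hFS_subset_FS a ((hb (Hindman.FS.singleton b n)).2))
    have hAIP : AIP (Hindman.FS b) := ⟨b.get, hbpos, fun m hm => by
      obtain ⟨H, hH, rfl⟩ := hm; exact Hindman.FS.finset_sum b H hH⟩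
    obtain ⟨m, hmD, hmb⟩ := hD _ hAIP
    exact (hb hmb).1 hmD
  have hAU : A ∈ U := key A hA
  have hBU : B ∈ U := key B hB
  obtain ⟨m, hm⟩ := Ultrafilter.nonempty_of_mem
    (Filter.inter_mem (Filter.inter_mem hAU hBU) hmem')
  exact ⟨m, ⟨hm.1.1, hm.1.2⟩, hFSx hm.2⟩
end

section
/- If A and B are MIP* subsets of N, then A ∩ B is an MIP* set. -/
open Finset

lemma hindmanFP_subset_FP (a : Stream' ℕ) : Hindman.FP a ⊆ FP a.get := by
  intro m hm
  induction hm with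
  | head' a => exact ⟨{0}, Finset.singleton_nonempty _, by simp [Stream'.head]⟩
  | tail' a m h ih =>
    obtain ⟨H, hne, rfl⟩ := ih
    refine ⟨H.image (· + 1), hne.image _, ?_⟩
    rw [Finset.prod_image (by intro x _ y _ h; simp only at h; omega)]
    exact Finset.prod_congr rfl fun t _ => rfl
  | cons' a m h ih =>
    obtain ⟨H, hne, rfl⟩ := ih
    refine ⟨insert 0 (H.image (· + 1)), Finset.insert_nonempty _ _, ?_⟩
    rw [Finset.prod_insert (by simp), Finset.prod_image (by intro x _ y _ h; simp only at h; omega)]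
    exact congrArg₂ (· * ·) rfl (Finset.prod_congr rfl fun t _ => rfl)

lemma FP_subset_hindmanFP (a : Stream' ℕ) : FP a.get ⊆ Hindman.FP a := by
  rintro m ⟨H, hne, rfl⟩
  exact Hindman.FP.finset_prod a H hne

lemma FP_pos {x : ℕ → ℕ} (hx : ∀ n, 0 < x n) : ∀ m ∈ FP x, 0 < m := by
  rintro m ⟨H, hne, rfl⟩
  exact Finset.prod_pos fun t _ => hx t

theorem mipstar_inter (A B : Set ℕ) (hA : MIPStar A) (hB : MIPStar B) :
    MIPStar (A ∩ B) := by
  rintro C ⟨x, hx, hFPx⟩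
  set a : Stream' ℕ := x with ha
  have hDA : Hindman.FP a ⊆ ⋃₀ {A ∩ FP x, Aᶜ ∩ FP x} := by
    intro m hm
    have hmF : m ∈ FP x := hindmanFP_subset_FP a hm
    by_cases hmA : m ∈ A
    · exact ⟨A ∩ FP x, Or.inl rfl, hmA, hmF⟩
    · exact ⟨Aᶜ ∩ FP x, Or.inr rfl, hmA, hmF⟩
  obtain ⟨c, hc, b, hb⟩ := Hindman.FP_partition_regular a {A ∩ FP x, Aᶜ ∩ FP x}
    ((Set.finite_singleton _).insert _) hDA
  have hbc : FP b.get ⊆ c := fun m hm => hb (FP_subset_hindmanFP b hm)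
  have hbpos : ∀ n, 0 < b.get n := by
    intro n
    rcases hc with rfl | rfl
    · exact FP_pos hx _ (hbc ⟨{n}, Finset.singleton_nonempty _, by simp⟩).2
    · exact FP_pos hx _ (hbc ⟨{n}, Finset.singleton_nonempty _, by simp⟩).2
  rcases hc with rfl | rfl
  · obtain ⟨z, hzB, hzA, hzF⟩ := hB _ ⟨b.get, hbpos, hbc⟩
    exact ⟨z, ⟨hzA, hzB⟩, hFPx hzF⟩
  · obtain ⟨z, hzA, hz⟩ := hA _ ⟨b.get, hbpos, hbc⟩
    exact absurd hzA hz.1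
end

section
/- Let A be an MIP* subset of N. Then there exists a sequence ⟨xₙ⟩ with xₙ ≥ 2 such that EXP₁(⟨xₙ⟩) ∪ EXP₂(⟨xₙ⟩) ⊆ A, where EXP₁(⟨xₙ⟩) is the set of iterated exponential towers x_{i_k}^{x_{i_{k-1}}^{...^{x_{i_1}}}} with i_1 < i_2 < ... < i_k, and EXP₂(⟨xₙ⟩) is the set of expressions x_{i_1}^{x_{i_2} ⋯ x_{i_k}} with i_1 < i_2 < ... < i_k. -/
open Finset

/-- Iterated exponential towers over strictly increasing finite index lists. -/
def EXP1 (x : ℕ → ℕ) : Set ℕ :=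
  {m | ∃ l : List ℕ, l ≠ [] ∧ l.Chain' (· < ·) ∧
        m = l.foldl (fun a i => x i ^ a) 1}

/-- A base raised to a product of strictly later terms. -/
def EXP2 (x : ℕ → ℕ) : Set ℕ :=
  {m | ∃ (i : ℕ) (F : Finset ℕ), (∀ j ∈ F, i < j) ∧
        m = x i ^ (∏ j ∈ F, x j)}

noncomputable section ExpAux

open Filter

attribute [local instance] Ultrafilter.mul Ultrafilter.add Ultrafilter.semigroup
  Ultrafilter.addSemigroup

private lemma expaux_FS_ge_two :
    ∀ {a : Stream' ℕ} {m : ℕ}, m ∈ Hindman.FS a → (∀ i, 2 ≤ a.get i) → 2 ≤ m := by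
  intro a m hm
  induction hm with
  | head' a => exact fun h => h 0
  | tail' a m _ ih => exact fun h => ih fun i => h (i + 1)
  | cons' a m _ ih =>
      intro h
      have h0 := h 0
      have := ih fun i => h (i + 1)
      change 2 ≤ a.get 0 + m
      omega

/-- A "good" ultrafilter: contains `[2,∞)` and all of its members are additively IP. -/
def GoodUF (U : Ultrafilter ℕ) : Prop :=
  {n : ℕ | 2 ≤ n} ∈ U ∧ ∀ B ∈ U, AIP B

lemma exists_good_idempotent : ∃ U : Ultrafilter ℕ, GoodUF U ∧ U * U = U := by
  obtain ⟨W, hWidem, hWFS⟩ :=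
    Hindman.exists_idempotent_ultrafilter_le_FS (fun n => 2 ^ (n + 1) : Stream' ℕ)
  set c : Stream' ℕ := (fun n => 2 ^ (n + 1) : Stream' ℕ) with hc
  have hcge : ∀ i, 2 ≤ c.get i := by
    intro i
    have : 2 ^ 1 ≤ 2 ^ (i + 1) := Nat.pow_le_pow_right (by norm_num) (by omega)
    simpa [hc, Stream'.get] using this
  have hFSc : {m : ℕ | m ∈ Hindman.FS c} ∈ W := hWFS
  -- W is a good ultrafilter
  have hWgood : GoodUF W := by
    constructor
    · exact mem_of_superset hFSc (fun m hm => expaux_FS_ge_two hm hcge)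
    · intro B hB
      obtain ⟨d, hd⟩ :=
        Hindman.exists_FS_of_large W hWidem (B ∩ {m : ℕ | m ∈ Hindman.FS c})
          (inter_mem hB hFSc)
      refine ⟨fun i => d.get i, ?_, ?_⟩
      · intro i
        have h1 : d.get i ∈ Hindman.FS d := Hindman.FS.singleton d i
        have h3 : 2 ≤ d.get i := expaux_FS_ge_two (hd h1).2 hcge
        show 0 < d.get i
        omega
      · rintro s ⟨H, hH, rfl⟩
        exact (hd (Hindman.FS.finset_sum d H hH)).1
  -- the set of good ultrafilters is a compact subsemigroup
  set S : Set (Ultrafilter ℕ) := {U | GoodUF U} with hS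
  have hSclosed : IsClosed S := by
    have : S = {U : Ultrafilter ℕ | {n : ℕ | 2 ≤ n} ∈ U} ∩
        ⋂ (B : Set ℕ) (_ : ¬ AIP B), {U : Ultrafilter ℕ | Bᶜ ∈ U} := by
      ext V
      simp only [hS, Set.mem_setOf_eq, Set.mem_inter_iff, Set.mem_iInter, GoodUF]
      constructor
      · rintro ⟨h1, h2⟩
        refine ⟨h1, fun B hB => Ultrafilter.compl_mem_iff_notMem.mpr fun hBV => hB (h2 B hBV)⟩
      · rintro ⟨h1, h2⟩
        refine ⟨h1, fun B hBV => ?_⟩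
        by_contra hnB
        exact (Ultrafilter.compl_mem_iff_notMem.mp (h2 B hnB)) hBV
    rw [this]
    exact (ultrafilter_isClosed_basic _).inter
      (isClosed_iInter fun B => isClosed_iInter fun _ => ultrafilter_isClosed_basic _)
  have hSmul : ∀ U ∈ S, ∀ V ∈ S, U * V ∈ S := by
    rintro U ⟨hU2, hUaip⟩ V ⟨hV2, hVaip⟩
    constructor
    · have : ∀ᶠ n in (U : Filter ℕ), ∀ᶠ m in (V : Filter ℕ), 2 ≤ n * m := by
        filter_upwards [hU2] with n hn
        filter_upwards [hV2] with m hm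
        calc 2 ≤ m := hm
        _ ≤ n * m := Nat.le_mul_of_pos_left m (by omega)
      have := (Ultrafilter.eventually_mul U V (fun k => 2 ≤ k)).mpr this
      rwa [Filter.eventually_iff, Ultrafilter.mem_coe] at this
    · intro B hB
      have hB' : ∀ᶠ n in (U : Filter ℕ), ∀ᶠ m in (V : Filter ℕ), n * m ∈ B := by
        have : ∀ᶠ k in ↑(U * V), k ∈ B := by
          rwa [Filter.eventually_iff, Set.setOf_mem_eq, Ultrafilter.mem_coe]
        exact (Ultrafilter.eventually_mul U V (· ∈ B)).mp this
      have hmem : ({n : ℕ | {m : ℕ | n * m ∈ B} ∈ V} ∩ {n : ℕ | 2 ≤ n}) ∈ U := by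
        refine inter_mem ?_ hU2
        simpa only [Filter.eventually_iff, Ultrafilter.mem_coe] using hB'
      obtain ⟨n, hn1, hn2⟩ := Ultrafilter.nonempty_of_mem hmem
      have hn2' : 2 ≤ n := hn2
      obtain ⟨d, hdpos, hdsub⟩ := hVaip _ hn1
      refine ⟨fun i => n * d i, fun i => Nat.mul_pos (by omega) (hdpos i), ?_⟩
      rintro s ⟨H, hH, rfl⟩
      have : ∑ t ∈ H, n * d t = n * ∑ t ∈ H, d t := by rw [Finset.mul_sum]
      rw [this]
      exact hdsub ⟨H, hH, rfl⟩
  obtain ⟨U, hUS, hUidem⟩ :=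
    exists_idempotent_in_compact_subsemigroup Ultrafilter.continuous_mul_left S
      ⟨W, hWgood⟩ hSclosed.isCompact hSmul
  exact ⟨U, hUS, hUidem⟩

/-! ### Consequences for an MIP* set -/

section Star

variable {A : Set ℕ} {U : Ultrafilter ℕ}

lemma memMIP (h2 : {n : ℕ | 2 ≤ n} ∈ U) (idem : U * U = U) :
    ∀ B ∈ U, MIP B := by
  intro B hB
  obtain ⟨w, hw⟩ := Hindman.exists_FP_of_large U idem (B ∩ {n : ℕ | 2 ≤ n}) (inter_mem hB h2)
  refine ⟨fun i => w.get i, ?_, ?_⟩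
  · intro i
    have h1 : 2 ≤ w.get i := (hw (Hindman.FP.singleton w i)).2
    show 0 < w.get i
    omega
  · rintro s ⟨H, hH, rfl⟩
    exact (hw (Hindman.FP.finset_prod w H hH)).1

lemma mipstar_mem (h2 : {n : ℕ | 2 ≤ n} ∈ U) (idem : U * U = U)
    {C : Set ℕ} (hC : MIPStar C) : C ∈ U := by
  by_contra h
  have : Cᶜ ∈ U := Ultrafilter.compl_mem_iff_notMem.mpr h
  obtain ⟨w, hw1, hw2⟩ := hC Cᶜ (memMIP h2 idem _ this)
  exact hw2 hw1

lemma Dt_mipstar (hA : MIPStar A) (t : ℕ) : MIPStar {b : ℕ | b ^ t ∈ A} := by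
  rintro B ⟨z, hz, hsub⟩
  have hMIP : MIP (FP fun i => z i ^ t) :=
    ⟨fun i => z i ^ t, fun i => pow_pos (hz i) t, subset_rfl⟩
  obtain ⟨w, hwA, H, hH, rfl⟩ := hA _ hMIP
  refine ⟨∏ j ∈ H, z j, ?_, hsub ⟨H, hH, rfl⟩⟩
  show (∏ j ∈ H, z j) ^ t ∈ A
  simp only [] at hwA
  rwa [Finset.prod_pow] at hwA

lemma frA_mem (hA : MIPStar A) (h2 : {n : ℕ | 2 ≤ n} ∈ U)
    (haip : ∀ B ∈ U, AIP B) :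
    {b : ℕ | {e : ℕ | b ^ e ∈ A} ∈ U} ∈ U := by
  by_contra h
  have hc : {b : ℕ | {e : ℕ | b ^ e ∈ A} ∈ U}ᶜ ∈ U := Ultrafilter.compl_mem_iff_notMem.mpr h
  obtain ⟨b, hb1, hb2'⟩ := Ultrafilter.nonempty_of_mem (inter_mem hc h2)
  have hb2 : 2 ≤ b := hb2'
  have hbc : {e : ℕ | b ^ e ∈ A}ᶜ ∈ U := Ultrafilter.compl_mem_iff_notMem.mpr hb1
  obtain ⟨d, hdpos, hdsub⟩ := haip _ hbc
  have hMIP : MIP Aᶜ := by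
    refine ⟨fun i => b ^ d i, fun i => pow_pos (by omega) _, ?_⟩
    rintro s ⟨H, hH, rfl⟩
    have : ∏ t ∈ H, b ^ d t = b ^ ∑ t ∈ H, d t := Finset.prod_pow_eq_pow_sum H d b
    rw [this]
    exact hdsub ⟨H, hH, rfl⟩
  obtain ⟨w, hw1, hw2⟩ := hA Aᶜ hMIP
  exact hw2 hw1

lemma shift_mem (idem : U * U = U) {B : Set ℕ} (hB : B ∈ U) :
    {b : ℕ | {e : ℕ | b * e ∈ B} ∈ U} ∈ U := by
  have hB' : B ∈ U * U := by rwa [idem]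
  have : ∀ᶠ k in ↑(U * U), k ∈ B := by
    rwa [Filter.eventually_iff, Set.setOf_mem_eq, Ultrafilter.mem_coe]
  have := (Ultrafilter.eventually_mul U U (· ∈ B)).mp this
  simpa only [Filter.eventually_iff, Ultrafilter.mem_coe] using this

end Star

/-! ### The recursive construction -/

section Rec

variable {A : Set ℕ} {U : Ultrafilter ℕ}

/-- All tower values over strictly increasing index lists below `x.length`, together with `1`. -/
def towSet (x : List ℕ) : Set ℕ :=
  {1} ∪ {t | ∃ l : List ℕ, l ≠ [] ∧ l.Chain' (· < ·) ∧ (∀ j ∈ l, j < x.length) ∧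
      t = l.foldl (fun a i => x.getD i 0 ^ a) 1}

/-- All partial EXP2-values over indices below `x.length`. -/
def vSet (x : List ℕ) : Set ℕ :=
  {v | ∃ i, i < x.length ∧ ∃ S : Finset ℕ, (∀ j ∈ S, i < j ∧ j < x.length) ∧
      v = x.getD i 0 ^ ∏ j ∈ S, x.getD j 0}

lemma sort_of_chain' {l : List ℕ} (h : l.Chain' (· < ·)) :
    l.toFinset.sort (· ≤ ·) = l := by
  have hp : l.Pairwise (· < ·) := List.isChain_iff_pairwise.mp h
  have nd : l.Nodup := hp.imp ne_of_lt
  exact List.Perm.eq_of_pairwise'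
    (Finset.pairwise_sort _ _) (hp.imp le_of_lt)
    (List.perm_of_nodup_nodup_toFinset_eq (Finset.sort_nodup _ _) nd
      (by rw [Finset.sort_toFinset]))

lemma towSet_finite (x : List ℕ) : (towSet x).Finite := by
  have hsub : towSet x ⊆ insert 1 ((fun S : Finset ℕ =>
      (S.sort (· ≤ ·)).foldl (fun a i => x.getD i 0 ^ a) 1) ''
      ↑((Finset.range x.length).powerset)) := by
    rintro t (rfl | ⟨l, hl0, hlc, hlt, rfl⟩)
    · exact Set.mem_insert _ _
    · refine Set.mem_insert_of_mem _ ⟨l.toFinset, ?_, ?_⟩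
      · simp only [Finset.coe_powerset, Set.mem_preimage, Set.mem_powerset_iff,
          Finset.coe_subset, Finset.mem_coe]
        intro j hj
        exact Finset.mem_range.mpr (hlt j (List.mem_toFinset.mp hj))
      · simp only [sort_of_chain' hlc]
  exact Set.Finite.subset (Set.Finite.insert 1
    (Set.Finite.image _ (Finset.finite_toSet _))) hsub

lemma vSet_finite (x : List ℕ) : (vSet x).Finite := by
  have hsub : vSet x ⊆ (fun p : ℕ × Finset ℕ => x.getD p.1 0 ^ ∏ j ∈ p.2, x.getD j 0) ''
      ↑((Finset.range x.length) ×ˢ (Finset.range x.length).powerset) := by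
    rintro v ⟨i, hi, S, hS, rfl⟩
    refine ⟨(i, S), ?_, rfl⟩
    simp only [Finset.coe_product, Set.mem_prod, Finset.mem_coe, Finset.mem_range,
      Finset.mem_powerset]
    exact ⟨hi, Finset.subset_iff.mpr fun {j} hj => Finset.mem_range.mpr (hS j hj).2⟩
  exact Set.Finite.subset (Set.Finite.image _ (Finset.finite_toSet _)) hsub

/-- The set of good choices for the next element of the sequence. -/
def goodSet (A : Set ℕ) (U : Ultrafilter ℕ) (x : List ℕ) : Set ℕ :=
  {b | 2 ≤ b ∧ b ∈ A ∧ {e : ℕ | b ^ e ∈ A} ∈ U ∧ (∀ t ∈ towSet x, b ^ t ∈ A) ∧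
    ∀ v ∈ vSet x, v ^ b ∈ A ∧ {e : ℕ | v ^ (b * e) ∈ A} ∈ U}

lemma goodSet_mem (hA : MIPStar A) (h2 : {n : ℕ | 2 ≤ n} ∈ U) (haip : ∀ B ∈ U, AIP B)
    (idem : U * U = U) (x : List ℕ) (hv : ∀ v ∈ vSet x, {e : ℕ | v ^ e ∈ A} ∈ U) :
    goodSet A U x ∈ U := by
  have hAU : A ∈ U := mipstar_mem h2 idem hA
  have hfr := frA_mem hA h2 haip
  have hT : (⋂ t ∈ towSet x, {b : ℕ | b ^ t ∈ A}) ∈ U :=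
    (Filter.biInter_mem (towSet_finite x)).mpr fun t _ =>
      mipstar_mem h2 idem (Dt_mipstar hA t)
  have hV : (⋂ v ∈ vSet x,
      ({b : ℕ | v ^ b ∈ A} ∩ {b : ℕ | {e : ℕ | v ^ (b * e) ∈ A} ∈ U})) ∈ U := by
    refine (Filter.biInter_mem (vSet_finite x)).mpr fun v hvx => inter_mem (hv v hvx) ?_
    exact shift_mem idem (hv v hvx)
  have hbig := inter_mem (inter_mem (inter_mem h2 hAU) hfr) (inter_mem hT hV)
  refine mem_of_superset hbig ?_
  rintro b ⟨⟨⟨hb2, hbA⟩, hbfr⟩, hbT, hbV⟩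
  refine ⟨hb2, hbA, hbfr, fun t ht => Set.mem_iInter₂.mp hbT t ht, fun v hvx => ?_⟩
  exact Set.mem_iInter₂.mp hbV v hvx

open Classical in
/-- Pick an element of the good set (if any). -/
def pickFn (A : Set ℕ) (U : Ultrafilter ℕ) (x : List ℕ) : ℕ :=
  if h : (goodSet A U x).Nonempty then h.choose else 2

/-- The list of the first `n` chosen elements. -/
def seqList (A : Set ℕ) (U : Ultrafilter ℕ) : ℕ → List ℕ
  | 0 => []
  | n + 1 => seqList A U n ++ [pickFn A U (seqList A U n)]

/-- The chosen sequence. -/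
def seqFn (A : Set ℕ) (U : Ultrafilter ℕ) (n : ℕ) : ℕ := pickFn A U (seqList A U n)

lemma pickFn_mem {x : List ℕ} (h : (goodSet A U x).Nonempty) :
    pickFn A U x ∈ goodSet A U x := by
  rw [pickFn, dif_pos h]
  exact h.choose_spec

lemma seqList_length : ∀ n, (seqList A U n).length = n := by
  intro n
  induction n with
  | zero => rfl
  | succ n ih => simp [seqList, ih]

lemma seqList_getD {n i : ℕ} (h : i < n) : (seqList A U n).getD i 0 = seqFn A U i := by
  induction n with
  | zero => omega
  | succ n ih =>
    show (seqList A U n ++ [pickFn A U (seqList A U n)]).getD i 0 = _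
    rcases Nat.lt_or_ge i n with hin | hin
    · rw [List.getD_append _ _ _ _ (by rw [seqList_length]; exact hin)]
      exact ih hin
    · have hieq : i = n := by omega
      subst hieq
      rw [List.getD_append_right _ _ _ _ (by rw [seqList_length])]
      simp [seqList_length, seqFn]

lemma foldl_pow_congr (f g : ℕ → ℕ) : ∀ (l : List ℕ), (∀ i ∈ l, f i = g i) → ∀ acc : ℕ,
    l.foldl (fun a i => f i ^ a) acc = l.foldl (fun a i => g i ^ a) acc := by
  intro l
  induction l with
  | nil => intro _ acc; rfl
  | cons hd tl ih =>
    intro h acc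
    simp only [List.foldl_cons]
    rw [h hd (by simp)]
    exact ih (fun i hi => h i (by simp [hi])) _

lemma mem_vSet_of {i n : ℕ} (S : Finset ℕ) (hin : i < n) (hS : ∀ j ∈ S, i < j ∧ j < n) :
    (seqFn A U i ^ ∏ j ∈ S, seqFn A U j) ∈ vSet (seqList A U n) := by
  refine ⟨i, by rw [seqList_length]; exact hin, S,
    by intro j hj; rw [seqList_length]; exact hS j hj, ?_⟩
  rw [seqList_getD hin]
  exact congrArg _ (Finset.prod_congr rfl fun j hj => (seqList_getD (hS j hj).2).symm)

lemma mem_towSet_of {k : ℕ} (l : List ℕ) (hl0 : l ≠ []) (hlc : l.Chain' (· < ·))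
    (hlt : ∀ j ∈ l, j < k) :
    (l.foldl (fun a i => seqFn A U i ^ a) 1) ∈ towSet (seqList A U k) := by
  refine Or.inr ⟨l, hl0, hlc, by intro j hj; rw [seqList_length]; exact hlt j hj, ?_⟩
  exact (foldl_pow_congr _ _ l (fun i hi => seqList_getD (hlt i hi)) 1).symm

lemma main_chain (hA : MIPStar A) (h2 : {n : ℕ | 2 ≤ n} ∈ U) (haip : ∀ B ∈ U, AIP B)
    (idem : U * U = U) :
    ∀ n, ∀ v ∈ vSet (seqList A U n), v ∈ A ∧ {e : ℕ | v ^ e ∈ A} ∈ U := by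
  intro n
  induction n with
  | zero =>
    rintro v ⟨i, hi, -⟩
    rw [seqList_length] at hi
    omega
  | succ n ih =>
    have hgood : goodSet A U (seqList A U n) ∈ U :=
      goodSet_mem hA h2 haip idem _ fun v hv => (ih v hv).2
    have hpick : seqFn A U n ∈ goodSet A U (seqList A U n) :=
      pickFn_mem (Ultrafilter.nonempty_of_mem hgood)
    rintro v ⟨i, hi, S, hS, rfl⟩
    rw [seqList_length] at hi
    have hSlt : ∀ j ∈ S, i < j ∧ j < n + 1 := by
      intro j hj
      have := hS j hj
      rwa [seqList_length] at this
    have hval : (seqList A U (n+1)).getD i 0 ^ ∏ j ∈ S, (seqList A U (n+1)).getD j 0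
        = seqFn A U i ^ ∏ j ∈ S, seqFn A U j := by
      rw [seqList_getD hi]
      exact congrArg _ (Finset.prod_congr rfl fun j hj => seqList_getD (hSlt j hj).2)
    rw [hval]
    rcases Nat.lt_or_ge i n with hin | hin
    · by_cases hnS : n ∈ S
      · have hwv : (seqFn A U i ^ ∏ j ∈ S.erase n, seqFn A U j) ∈ vSet (seqList A U n) := by
          refine mem_vSet_of _ hin fun j hj => ?_
          have h1 := Finset.mem_erase.mp hj
          have h2' := hSlt j h1.2
          exact ⟨h2'.1, by omega⟩
        have hcomp := hpick.2.2.2.2 _ hwv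
        have hprod : ∏ j ∈ S, seqFn A U j
            = (∏ j ∈ S.erase n, seqFn A U j) * seqFn A U n :=
          (Finset.prod_erase_mul S _ hnS).symm
        constructor
        · rw [hprod, pow_mul]
          exact hcomp.1
        · have heq : {e : ℕ | (seqFn A U i ^ ∏ j ∈ S, seqFn A U j) ^ e ∈ A}
              = {e : ℕ | (seqFn A U i ^ ∏ j ∈ S.erase n, seqFn A U j) ^ (seqFn A U n * e) ∈ A} := by
            ext e
            simp only [Set.mem_setOf_eq]
            rw [hprod, pow_mul, ← pow_mul]
          rw [heq]
          exact hcomp.2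
      · refine ih _ (mem_vSet_of S hin fun j hj => ?_)
        have := hSlt j hj
        have hjn : j ≠ n := fun hjeq => hnS (hjeq ▸ hj)
        exact ⟨this.1, by omega⟩
    · have hieq : i = n := by omega
      subst hieq
      have hSempty : S = ∅ := Finset.eq_empty_of_forall_notMem fun j hj => by
        have := hSlt j hj; omega
      subst hSempty
      rw [Finset.prod_empty, pow_one]
      exact ⟨hpick.2.1, hpick.2.2.1⟩

lemma main_pick (hA : MIPStar A) (h2 : {n : ℕ | 2 ≤ n} ∈ U) (haip : ∀ B ∈ U, AIP B)
    (idem : U * U = U) (n : ℕ) :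
    seqFn A U n ∈ goodSet A U (seqList A U n) := by
  have hgood : goodSet A U (seqList A U n) ∈ U :=
    goodSet_mem hA h2 haip idem _ fun v hv => (main_chain hA h2 haip idem n v hv).2
  exact pickFn_mem (Ultrafilter.nonempty_of_mem hgood)

end Rec

end ExpAux

theorem mipstar_exp_patterns (A : Set ℕ) (hA : MIPStar A) :
    ∃ x : ℕ → ℕ, (∀ n, 2 ≤ x n) ∧ EXP1 x ∪ EXP2 x ⊆ A := by
  obtain ⟨U, ⟨h2, haip⟩, idem⟩ := exists_good_idempotent
  have hpick := fun n => main_pick hA h2 haip idem (U := U) n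
  refine ⟨seqFn A U, fun n => (hpick n).1, ?_⟩
  rintro m (⟨l, hl0, hlc, rfl⟩ | ⟨i, F, hF, rfl⟩)
  · -- EXP1
    rcases l.eq_nil_or_concat' with rfl | ⟨L, k, rfl⟩
    · exact absurd rfl hl0
    · rw [List.foldl_append]
      have hp : (L ++ [k]).Pairwise (· < ·) := List.isChain_iff_pairwise.mp hlc
      have pa := List.pairwise_append.mp hp
      have hlk : ∀ j ∈ L, j < k := fun j hj => pa.2.2 j hj k (by simp)
      have ht : (L.foldl (fun a i => seqFn A U i ^ a) 1) ∈ towSet (seqList A U k) := by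
        rcases eq_or_ne L [] with rfl | hLne
        · exact Or.inl rfl
        · exact mem_towSet_of L hLne (List.isChain_iff_pairwise.mpr pa.1) hlk
      simpa using (hpick k).2.2.2.1 _ ht
  · -- EXP2
    rcases F.eq_empty_or_nonempty with rfl | hFne
    · rw [Finset.prod_empty, pow_one]
      exact (hpick i).2.1
    · set k := F.max' hFne with hk
      have hkF : k ∈ F := F.max'_mem hFne
      have hik : i < k := hF k hkF
      have hwv : (seqFn A U i ^ ∏ j ∈ F.erase k, seqFn A U j) ∈ vSet (seqList A U k) := by
        refine mem_vSet_of _ hik fun j hj => ?_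
        have h1 := Finset.mem_erase.mp hj
        have hle : j ≤ k := F.le_max' j h1.2
        exact ⟨hF j h1.2, lt_of_le_of_ne hle h1.1⟩
      have hcomp := ((hpick k).2.2.2.2 _ hwv).1
      rwa [← Finset.prod_erase_mul F _ hkF, pow_mul]
end
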